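/- Let X ⊆ ℕ be an infinite set with uniqueness of sums, let u be an X-adequate ultrafilter on ℕ, and let A ∈ u witness this. Then for every n ≥ 1, FS_n^X(A) ∈ u^n. -/

import Mathlib

open Filter

attribute [local instance] Ultrafilter.add Ultrafilter.addSemigroup

/-- `sumPow u n` is the `n`-fold sum `u + ⋯ + u` of the ultrafilter `u`, for `n ≥ 1`
(with junk value `u` at `n = 0`). -/
def sumPow (u : Ultrafilter ℕ) : ℕ → Ultrafilter ℕ
  | 0 => u
  | 1 => u
  | n + 2 => sumPow u (n + 1) + u

/-- `FS A` is the set of all sums of nonempty finite subsets of `A`. -/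
def FS (A : Set ℕ) : Set ℕ :=
  {s | ∃ F : Finset ℕ, F.Nonempty ∧ ↑F ⊆ A ∧ s = ∑ i ∈ F, i}

/-- `A` has uniqueness of sums: two nonempty finite subsets of `A` with the same sum are equal. -/
def UniquenessOfSums (A : Set ℕ) : Prop :=
  ∀ F G : Finset ℕ, ↑F ⊆ A → ↑G ⊆ A → F.Nonempty → G.Nonempty →
    (∑ i ∈ F, i) = ∑ i ∈ G, i → F = G

/-- `⟨a 0, …, a (n-1)⟩` is a (finite) sum subsystem of the sequence `x`: there is a block
sequence `⟨H i⟩` of nonempty finite sets with `a i = ∑_{k ∈ H i} x k`. -/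
def IsSumSubsystem (x : ℕ → ℕ) {n : ℕ} (a : Fin n → ℕ) : Prop :=
  ∃ H : Fin n → Finset ℕ, (∀ i, (H i).Nonempty) ∧
    (∀ i j : Fin n, i < j → ∀ k ∈ H i, ∀ l ∈ H j, k < l) ∧
    ∀ i, a i = ∑ k ∈ H i, x k

/-- `FSnX n X A` is the set of sums `a 0 + ⋯ + a (n-1)` with all `a i ∈ A` and
`⟨a 0, …, a (n-1)⟩` a sum subsystem of the increasing enumeration of `X`. -/
def FSnX (n : ℕ) (X A : Set ℕ) : Set ℕ :=
  {s | ∃ a : Fin n → ℕ, (∀ i, a i ∈ A) ∧ IsSumSubsystem (Nat.nth (· ∈ X)) a ∧ s = ∑ i, a i}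

/-- `A` is `X`-adequate: `A ⊆ FS X` and for every subsequence of the increasing enumeration
of `X` there is a unique `m` such that the sum of the first `m + 1` terms lies in `A`. -/
def IsAdequateSet (X A : Set ℕ) : Prop :=
  A ⊆ FS X ∧ ∀ g : ℕ → ℕ, StrictMono g →
    ∃! m : ℕ, (∑ k ∈ Finset.range (m + 1), Nat.nth (· ∈ X) (g k)) ∈ A


open Classical in
private lemma sum_image_count (p : ℕ → Prop) (F : Finset ℕ) (hF : ∀ a ∈ F, p a) :
    ∑ j ∈ F.image (Nat.count p), Nat.nth p j = ∑ a ∈ F, a := by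
  rw [Finset.sum_image]
  · exact Finset.sum_congr rfl fun a ha => Nat.nth_count (hF a ha)
  · intro a ha b hb h
    have := congrArg (Nat.nth p) h
    rwa [Nat.nth_count (hF a ha), Nat.nth_count (hF b hb)] at this

private lemma sumPow_succ (u : Ultrafilter ℕ) (n : ℕ) (hn : 1 ≤ n) :
    sumPow u (n + 1) = sumPow u n + u := by
  match n, hn with
  | n + 1, _ => rfl


/-- If `X` is infinite with uniqueness of sums and `u` is an `X`-adequate ultrafilter,
witnessed by `A`, then `FS_n^X(A) ∈ u^n` for every `n ≥ 1`. -/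
theorem statement3 (X : Set ℕ) (hXinf : X.Infinite) (hX : UniquenessOfSums X)
    (u : Ultrafilter ℕ) (A : Set ℕ) (hAu : A ∈ u) (hA : IsAdequateSet X A)
    (hcof : ∀ Y : Set ℕ, Y ⊆ X → (X \ Y).Finite → FS Y ∈ u)
    (n : ℕ) (hn : 1 ≤ n) :
    FSnX n X A ∈ sumPow u n := by
  classical
  have hpinf : (setOf (· ∈ X)).Infinite := hXinf
  have hmono : StrictMono (Nat.nth (· ∈ X)) := Nat.nth_strictMono hpinf
  -- a single element of A gives a one-block subsystem
  have hblock : ∀ a ∈ A, ∃ H : Finset ℕ, H.Nonempty ∧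
      a = ∑ k ∈ H, Nat.nth (· ∈ X) k := by
    intro a ha
    obtain ⟨F, hFne, hFX, hFsum⟩ := hA.1 ha
    refine ⟨F.image (Nat.count (· ∈ X)), hFne.image (Nat.count (· ∈ X)), ?_⟩
    rw [sum_image_count (· ∈ X) F fun b hb => hFX hb, hFsum]
  induction n, hn using Nat.le_induction with
  | base =>
    show FSnX 1 X A ∈ u
    refine u.toFilter.mem_of_superset hAu ?_
    intro a ha
    obtain ⟨H, hHne, hHsum⟩ := hblock a ha
    refine ⟨fun _ => a, fun _ => ha, ⟨fun _ => H, fun _ => hHne, ?_, fun _ => hHsum⟩, ?_⟩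
    · intro i j hij
      exact absurd (Subsingleton.elim i j ▸ hij) (lt_irrefl _)
    · simp
  | succ n hn ih =>
    rw [sumPow_succ u n hn]
    show ∀ᶠ z in ↑(sumPow u n + u), z ∈ FSnX (n + 1) X A
    rw [Ultrafilter.eventually_add]
    filter_upwards [ih] with m hm
    obtain ⟨a, haA, ⟨H, hHne, hHord, hHsum⟩, hmsum⟩ := hm
    set N : ℕ := Finset.univ.sup fun i => (H i).sup id with hN
    set Y : Set ℕ := {b | b ∈ X ∧ Nat.nth (· ∈ X) N < b} with hYdef
    have hYX : Y ⊆ X := fun b hb => hb.1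
    have hYfin : (X \ Y).Finite := by
      refine (Set.finite_Iic (Nat.nth (· ∈ X) N)).subset ?_
      rintro b ⟨hbX, hbY⟩
      by_contra hle
      exact hbY ⟨hbX, lt_of_not_ge hle⟩
    filter_upwards [hAu, hcof Y hYX hYfin] with k hkA hkY
    obtain ⟨F, hFne, hFY, hksum⟩ := hkY
    have hFX : ∀ b ∈ F, b ∈ X := fun b hb => (hFY hb).1
    refine ⟨Fin.snoc a k, ?_, ⟨Fin.snoc H (F.image (Nat.count (· ∈ X))), ?_, ?_, ?_⟩, ?_⟩
    · intro i
      induction i using Fin.lastCases with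
      | last => simpa using hkA
      | cast i => simpa using haA i
    · intro i
      induction i using Fin.lastCases with
      | last => simpa using hFne.image (Nat.count (· ∈ X))
      | cast i => simpa using hHne i
    · intro i j hij
      induction j using Fin.lastCases with
      | last =>
        have hi : i ≠ Fin.last n := Fin.ne_last_of_lt hij
        obtain ⟨i', rfl⟩ := Fin.exists_castSucc_eq.mpr hi
        intro k' hk' l hl
        simp only [Fin.snoc_castSucc, Fin.snoc_last] at hk' hl
        obtain ⟨b, hbF, rfl⟩ := Finset.mem_image.mp hl
        have hk'N : k' ≤ N := le_trans (Finset.le_sup (f := id) hk')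
          (Finset.le_sup (f := fun i => (H i).sup id) (Finset.mem_univ i'))
        have hbY := hFY hbF
        have : Nat.nth (· ∈ X) N < Nat.nth (· ∈ X) (Nat.count (· ∈ X) b) := by
          rw [Nat.nth_count hbY.1]; exact hbY.2
        exact lt_of_le_of_lt hk'N (hmono.lt_iff_lt.mp this)
      | cast j' =>
        have hi : i ≠ Fin.last n := by
          intro h; subst h
          exact absurd (lt_of_lt_of_le hij (Fin.le_last _)) (lt_irrefl _)
        obtain ⟨i', rfl⟩ := Fin.exists_castSucc_eq.mpr hi
        have hij' : i' < j' := by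
          rwa [Fin.castSucc_lt_castSucc_iff] at hij
        intro k' hk' l hl
        simp only [Fin.snoc_castSucc] at hk' hl
        exact hHord i' j' hij' k' hk' l hl
    · intro i
      induction i using Fin.lastCases with
      | last =>
        simp only [Fin.snoc_last]
        rw [sum_image_count (· ∈ X) F hFX, ← hksum]
      | cast i => simpa using hHsum i
    · rw [Fin.sum_univ_castSucc]
      simp [hmsum]
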